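/- Let f : [0,1] → ℝ be continuous, let s > 1, and for n ≥ 1 and 1 ≤ l ≤ 2ⁿ let O(f,n,l) = max over x ∈ [(l-1)/2ⁿ, l/2ⁿ] of |f(x) - f((l-1)/2ⁿ)|. If lim_{n→∞} Σ_{l=1}^{2ⁿ} O(f,n,l)^s = 0, then the Hausdorff dimension of the graph {(x,f(x)) : x ∈ [0,1]} is at most s. -/

import Mathlib

open Filter Set MeasureTheory ENNReal NNReal Topology

private lemma diam_prod_Icc_le' (a b c d : ℝ) :
    EMetric.diam (Set.Icc a b ×ˢ Set.Icc c d) ≤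
      max (ENNReal.ofReal (b - a)) (ENNReal.ofReal (d - c)) := by
  apply EMetric.diam_le
  rintro ⟨x1, x2⟩ ⟨hx1, hx2⟩ ⟨y1, y2⟩ ⟨hy1, hy2⟩
  rw [Prod.edist_eq]
  exact max_le_max
    ((EMetric.edist_le_diam_of_mem hx1 hy1).trans (Real.ediam_Icc a b).le)
    ((EMetric.edist_le_diam_of_mem hx2 hy2).trans (Real.ediam_Icc c d).le)

private lemma add_rpow_le_two_rpow_mul' {a b s : ℝ} (ha : 0 ≤ a) (hb : 0 ≤ b) (hs : 0 ≤ s) :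
    (a + b) ^ s ≤ 2 ^ s * (a ^ s + b ^ s) := by
  have h1 : a + b ≤ 2 * max a b := by
    rcases le_total a b with h | h
    · rw [max_eq_right h]; linarith
    · rw [max_eq_left h]; linarith
  have hm : 0 ≤ max a b := le_trans ha (le_max_left a b)
  calc (a + b) ^ s ≤ (2 * max a b) ^ s := Real.rpow_le_rpow (by linarith) h1 hs
    _ = 2 ^ s * (max a b) ^ s := Real.mul_rpow (by norm_num) hm
    _ ≤ 2 ^ s * (a ^ s + b ^ s) := by
        apply mul_le_mul_of_nonneg_left _ (Real.rpow_nonneg (by norm_num) s)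
        rcases le_total a b with h | h
        · rw [max_eq_right h]; nlinarith [Real.rpow_nonneg ha s]
        · rw [max_eq_left h]; nlinarith [Real.rpow_nonneg hb s]

set_option maxHeartbeats 2000000 in
/-- Covering lemma: if the `s`-th powers of the dyadic oscillations of `f`
tend to `0`, then the Hausdorff dimension of the graph of `f` is at most `s`. -/
theorem dimH_graph_le_of_oscillation (f : ℝ → ℝ) (hf : ContinuousOn f (Set.Icc 0 1))
    (s : ℝ) (hs : 1 < s) (O : ℕ → ℕ → ℝ)
    (hO : ∀ n : ℕ, 1 ≤ n → ∀ l : ℕ, 1 ≤ l → l ≤ 2^n →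
      IsGreatest ((fun x => |f x - f (((l:ℝ)-1)/2^n)|) ''
        Set.Icc (((l:ℝ)-1)/2^n) ((l:ℝ)/2^n)) (O n l))
    (hlim : Filter.Tendsto (fun n => ∑ l ∈ Finset.Icc 1 (2^n), O n l ^ s)
      Filter.atTop (nhds 0)) :
    dimH {q : ℝ × ℝ | ∃ x ∈ Set.Icc (0:ℝ) 1, q = (x, f x)} ≤ ENNReal.ofReal s := by
  have hs0 : (0:ℝ) < s := by linarith
  set G := {q : ℝ × ℝ | ∃ x ∈ Set.Icc (0:ℝ) 1, q = (x, f x)} with hG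
  set S : ℕ → ℝ := fun n => ∑ l ∈ Finset.Icc 1 (2^n), O n l ^ s with hSdef
  have hpow : ∀ n : ℕ, (0:ℝ) < 2 ^ n := fun n => by positivity
  -- nonnegativity of oscillations
  have hO0 : ∀ n : ℕ, 1 ≤ n → ∀ l : ℕ, 1 ≤ l → l ≤ 2 ^ n → 0 ≤ O n l := by
    intro n hn l h1 h2
    refine (hO n hn l h1 h2).2 ⟨((l:ℝ)-1)/2^n, ⟨le_refl _, ?_⟩, by simp⟩
    gcongr
    linarith
  have hS0 : ∀ n : ℕ, 1 ≤ n → 0 ≤ S n := by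
    intro n hn
    apply Finset.sum_nonneg
    intro l hl
    obtain ⟨h1, h2⟩ := Finset.mem_Icc.mp hl
    exact Real.rpow_nonneg (hO0 n hn l h1 h2) s
  -- each oscillation is bounded by `(S n)^(1/s)`
  have hOS : ∀ n : ℕ, 1 ≤ n → ∀ l : ℕ, 1 ≤ l → l ≤ 2 ^ n → O n l ≤ S n ^ (1/s) := by
    intro n hn l h1 h2
    have hOl := hO0 n hn l h1 h2
    have hterm : O n l ^ s ≤ S n := by
      apply Finset.single_le_sum (f := fun l' => O n l' ^ s) _ (Finset.mem_Icc.mpr ⟨h1, h2⟩)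
      intro l' hl'
      obtain ⟨h1', h2'⟩ := Finset.mem_Icc.mp hl'
      exact Real.rpow_nonneg (hO0 n hn l' h1' h2') s
    calc O n l = (O n l ^ s) ^ (1/s) := by
          rw [← Real.rpow_mul hOl, mul_one_div, div_self (ne_of_gt hs0), Real.rpow_one]
      _ ≤ S n ^ (1/s) := Real.rpow_le_rpow (Real.rpow_nonneg hOl s) hterm (by positivity)
  -- covering rectangles
  set R : ℕ → ℕ → Set (ℝ × ℝ) := fun n l =>
    Set.Icc (((l:ℝ)-1)/2^n) ((l:ℝ)/2^n) ×ˢ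
      Set.Icc (f (((l:ℝ)-1)/2^n) - O n l) (f (((l:ℝ)-1)/2^n) + O n l) with hRdef
  set t : (n : ℕ) → Fin (2^n) → Set (ℝ × ℝ) := fun n i => R n (i.1+1) with htdef
  set r : ℕ → ℝ≥0∞ := fun n => ENNReal.ofReal ((2:ℝ)⁻¹ ^ n + 2 * S n ^ (1/s)) with hrdef
  -- the uniform diameter bound tends to 0
  have h2' : Tendsto (fun n => S n ^ (1/s)) atTop (𝓝 0) := by
    have hc : ContinuousAt (fun x : ℝ => x ^ (1/s)) 0 :=
      Real.continuousAt_rpow_const 0 (1/s) (Or.inr (by positivity))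
    have := hc.tendsto.comp hlim
    have hz : (0:ℝ) ^ (1/s) = 0 := Real.zero_rpow (ne_of_gt (by positivity : (0:ℝ) < 1/s))
    simpa only [Function.comp_def, hz] using this
  have hreal : Tendsto (fun n => (2:ℝ)⁻¹ ^ n + 2 * S n ^ (1/s)) atTop (𝓝 0) := by
    have ha : Tendsto (fun n => (2:ℝ)⁻¹ ^ n) atTop (𝓝 0) :=
      tendsto_pow_atTop_nhds_zero_of_lt_one (by norm_num) (by norm_num)
    simpa using ha.add (h2'.const_mul 2)
  have hr : Tendsto r atTop (𝓝 0) := by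
    simpa only [ENNReal.ofReal_zero] using ENNReal.tendsto_ofReal hreal
  -- pointwise diameter estimate
  have hdiam : ∀ n : ℕ, 1 ≤ n → ∀ i : Fin (2^n),
      EMetric.diam (t n i) ≤ ENNReal.ofReal ((2:ℝ)⁻¹ ^ n + 2 * O n (i.1+1)) := by
    intro n hn i
    set l := i.1 + 1 with hl
    have h1 : 1 ≤ l := Nat.le_add_left 1 i.1
    have h2 : l ≤ 2^n := i.2
    have hOl := hO0 n hn l h1 h2
    have e1 : (l:ℝ)/2^n - ((l:ℝ)-1)/2^n = (2:ℝ)⁻¹ ^ n := by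
      rw [div_sub_div_same, inv_pow]
      ring_nf
    have e2 : (f (((l:ℝ)-1)/2^n) + O n l) - (f (((l:ℝ)-1)/2^n) - O n l) = 2 * O n l := by ring
    refine (diam_prod_Icc_le' _ _ _ _).trans ?_
    rw [e1, e2]
    apply max_le
    · apply ENNReal.ofReal_le_ofReal; nlinarith
    · apply ENNReal.ofReal_le_ofReal
      have : (0:ℝ) ≤ (2:ℝ)⁻¹ ^ n := by positivity
      linarith
  have ht : ∀ᶠ n in atTop, ∀ i : Fin (2^n), EMetric.diam (t n i) ≤ r n := by
    filter_upwards [eventually_ge_atTop 1] with n hn i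
    refine (hdiam n hn i).trans (ENNReal.ofReal_le_ofReal ?_)
    have := hOS n hn (i.1+1) (Nat.le_add_left 1 i.1) i.2
    linarith
  -- covering property
  have hst : ∀ᶠ n in atTop, G ⊆ ⋃ i : Fin (2^n), t n i := by
    filter_upwards [eventually_ge_atTop 1] with n hn
    rintro q ⟨x, ⟨hx0, hx1⟩, rfl⟩
    have h2n := hpow n
    set a := x * 2^n with ha
    have ha0 : 0 ≤ a := by positivity
    set l := max 1 ⌈a⌉₊ with hl
    have h1 : 1 ≤ l := le_max_left _ _
    have h2 : l ≤ 2^n := by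
      apply max_le Nat.one_le_two_pow
      rw [Nat.ceil_le]
      push_cast
      nlinarith
    have hxle : x ≤ (l:ℝ)/2^n := by
      rw [le_div_iff₀ h2n]
      calc x * 2^n ≤ (⌈a⌉₊:ℝ) := Nat.le_ceil a
        _ ≤ (l:ℝ) := by exact_mod_cast le_max_right 1 ⌈a⌉₊
    have hxge : ((l:ℝ)-1)/2^n ≤ x := by
      rw [div_le_iff₀ h2n]
      rcases le_or_gt ⌈a⌉₊ 1 with h | h
      · have hl1 : l = 1 := by omega
        rw [hl1]; push_cast; nlinarith
      · have hleq : l = ⌈a⌉₊ := max_eq_right h.le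
        have hceil := Nat.ceil_lt_add_one ha0
        rw [hleq]
        linarith
    have hmem : x ∈ Set.Icc (((l:ℝ)-1)/2^n) ((l:ℝ)/2^n) := ⟨hxge, hxle⟩
    have habs : |f x - f (((l:ℝ)-1)/2^n)| ≤ O n l := (hO n hn l h1 h2).2 ⟨x, hmem, rfl⟩
    obtain ⟨habs1, habs2⟩ := abs_le.mp habs
    refine Set.mem_iUnion.mpr ⟨⟨l - 1, by omega⟩, ?_⟩
    have hll : (l - 1) + 1 = l := Nat.succ_pred_eq_of_pos h1
    simp only [htdef, hRdef, hll]
    exact ⟨hmem, by constructor <;> linarith⟩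
  -- main Hausdorff measure bound
  have key : μH[s] G ≤ liminf (fun n => ∑ i : Fin (2^n), EMetric.diam (t n i) ^ s) atTop :=
    Measure.hausdorffMeasure_le_liminf_sum s G r hr t ht hst
  -- bound the sums
  set c : ℝ := 2 * (2:ℝ)⁻¹ ^ s with hcdef
  set g : ℕ → ℝ := fun n => 2^s * (c^n + 2^s * S n) with hgdef
  have hcn : ∀ n : ℕ, (2:ℝ)^n * ((2:ℝ)⁻¹ ^ n) ^ s = c ^ n := by
    intro n
    rw [hcdef, mul_pow]
    congr 1
    rw [← Real.rpow_natCast (2:ℝ)⁻¹ n, ← Real.rpow_mul (by norm_num), mul_comm,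
      Real.rpow_mul (by norm_num), Real.rpow_natCast]
  have hsum : ∀ n : ℕ, ∑ i : Fin (2^n), O n (i.1+1) ^ s = S n := by
    intro n
    rw [Fin.sum_univ_eq_sum_range (fun j => O n (j+1) ^ s) (2^n)]
    show _ = ∑ l ∈ Finset.Icc 1 (2^n), O n l ^ s
    rw [← Finset.Ico_add_one_right_eq_Icc, Finset.sum_Ico_eq_sum_range]
    exact Finset.sum_congr (by norm_num) fun i _ => by rw [add_comm]
  have hb : ∀ᶠ n in atTop,
      (∑ i : Fin (2^n), EMetric.diam (t n i) ^ s) ≤ ENNReal.ofReal (g n) := by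
    filter_upwards [eventually_ge_atTop 1] with n hn
    have hterm : ∀ i : Fin (2^n), EMetric.diam (t n i) ^ s ≤
        ENNReal.ofReal (2^s * (((2:ℝ)⁻¹ ^ n) ^ s + 2^s * O n (i.1+1) ^ s)) := by
      intro i
      have h1 : 1 ≤ i.1 + 1 := Nat.le_add_left 1 i.1
      have hOl := hO0 n hn (i.1+1) h1 i.2
      have hinv : (0:ℝ) ≤ (2:ℝ)⁻¹ ^ n := by positivity
      calc EMetric.diam (t n i) ^ s
          ≤ (ENNReal.ofReal ((2:ℝ)⁻¹ ^ n + 2 * O n (i.1+1))) ^ s :=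
            ENNReal.rpow_le_rpow (hdiam n hn i) hs0.le
        _ = ENNReal.ofReal (((2:ℝ)⁻¹ ^ n + 2 * O n (i.1+1)) ^ s) :=
            ENNReal.ofReal_rpow_of_nonneg (by linarith) hs0.le
        _ ≤ ENNReal.ofReal (2^s * (((2:ℝ)⁻¹ ^ n) ^ s + (2 * O n (i.1+1)) ^ s)) :=
            ENNReal.ofReal_le_ofReal
              (add_rpow_le_two_rpow_mul' hinv (by linarith) hs0.le)
        _ = ENNReal.ofReal (2^s * (((2:ℝ)⁻¹ ^ n) ^ s + 2^s * O n (i.1+1) ^ s)) := by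
            rw [Real.mul_rpow (by norm_num) hOl]
    calc (∑ i : Fin (2^n), EMetric.diam (t n i) ^ s)
        ≤ ∑ i : Fin (2^n),
            ENNReal.ofReal (2^s * (((2:ℝ)⁻¹ ^ n) ^ s + 2^s * O n (i.1+1) ^ s)) :=
          Finset.sum_le_sum fun i _ => hterm i
      _ = ENNReal.ofReal (∑ i : Fin (2^n),
            2^s * (((2:ℝ)⁻¹ ^ n) ^ s + 2^s * O n (i.1+1) ^ s)) := by
          rw [ENNReal.ofReal_sum_of_nonneg]
          intro i _
          have hOl := hO0 n hn (i.1+1) (Nat.le_add_left 1 i.1) i.2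
          positivity
      _ = ENNReal.ofReal (g n) := by
          congr 1
          rw [← Finset.mul_sum, Finset.sum_add_distrib, Finset.sum_const, ← Finset.mul_sum,
            hsum n, Finset.card_univ, Fintype.card_fin, nsmul_eq_mul, hgdef]
          push_cast
          rw [← hcn n]
  -- the bound tends to 0
  have hc0 : (0:ℝ) ≤ c := by rw [hcdef]; positivity
  have hc1 : c < 1 := by
    have : (2:ℝ)⁻¹ ^ s < (2:ℝ)⁻¹ ^ (1:ℝ) :=
      Real.rpow_lt_rpow_of_exponent_gt (by norm_num) (by norm_num) hs
    rw [Real.rpow_one] at this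
    rw [hcdef]; linarith
  have hgto : Tendsto g atTop (𝓝 0) := by
    have h1 : Tendsto (fun n => c ^ n) atTop (𝓝 0) :=
      tendsto_pow_atTop_nhds_zero_of_lt_one hc0 hc1
    have := (h1.add (hlim.const_mul (2^s))).const_mul (2^s)
    simpa [hgdef] using this
  have hofto : Tendsto (fun n : ℕ => ENNReal.ofReal (g n)) atTop (𝓝 0) := by
    simpa only [ENNReal.ofReal_zero] using ENNReal.tendsto_ofReal hgto
  have hliminf : liminf (fun n : ℕ => ∑ i : Fin (2^n), EMetric.diam (t n i) ^ s) atTop = 0 := by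
    apply le_antisymm _ (zero_le' (a := _))
    calc liminf (fun n : ℕ => ∑ i : Fin (2^n), EMetric.diam (t n i) ^ s) atTop
        ≤ liminf (fun n : ℕ => ENNReal.ofReal (g n)) atTop := liminf_le_liminf hb
      _ = 0 := hofto.liminf_eq
  have hμ : μH[s] G = 0 := le_antisymm (key.trans hliminf.le) (zero_le' (a := _))
  have hcoe : ((s.toNNReal : ℝ≥0) : ℝ) = s := Real.coe_toNNReal s hs0.le
  have hfin : μH[((s.toNNReal : ℝ≥0) : ℝ)] G ≠ ⊤ := by
    rw [hcoe, hμ]; exact ENNReal.zero_ne_top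
  have := dimH_le_of_hausdorffMeasure_ne_top hfin
  rwa [ENNReal.ofReal]
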